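/- For 0 < p < 1/2 and 0 ≤ e ≤ 2p, the value D(x) = H(x*p) - (1-e)·H(x) - H(p) is nonpositive for all x ∈ [0,1]. -/

import Mathlib

open Real Set

/-- Binary entropy function (base 2). -/
noncomputable def binH (t : ℝ) : ℝ := -(t * Real.logb 2 t) - (1 - t) * Real.logb 2 (1 - t)

/-- Binary convolution x*p = x(1-p)+p(1-x). -/
def bconv (x p : ℝ) : ℝ := x * (1 - p) + p * (1 - x)

/-- D(x) = H(x*p) - (1-e) H(x) - H(p). -/
noncomputable def Dfun (p e x : ℝ) : ℝ := binH (bconv x p) - (1 - e) * binH x - binH p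

lemma binH_eq (t : ℝ) : binH t = Real.binEntropy t / Real.log 2 := by
  simp [binH, Real.binEntropy, Real.logb, Real.log_inv]
  ring

lemma bconv_mem {x p : ℝ} (hp0 : 0 < p) (hp1 : p < 1/2) (hx0 : 0 ≤ x) (hx1 : x < 1/2) :
    x < bconv x p ∧ bconv x p < 1/2 := by
  constructor <;> [nlinarith [bconv, show bconv x p = x*(1-p)+p*(1-x) from rfl];
    nlinarith [show bconv x p = x*(1-p)+p*(1-x) from rfl]]

noncomputable def gfun (p x : ℝ) : ℝ := Real.binEntropy (bconv x p) - (1 - 2*p) * Real.binEntropy x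

lemma gfun_anti (p : ℝ) (hp0 : 0 < p) (hp1 : p < 1/2) :
    StrictAntiOn (gfun p) (Set.Icc 0 (1/2)) := by
  apply strictAntiOn_of_deriv_neg (convex_Icc _ _)
  · apply Continuous.continuousOn
    unfold gfun bconv
    fun_prop
  · intro x hx
    rw [interior_Icc] at hx
    obtain ⟨hx0, hx1⟩ := hx
    set y := bconv x p with hy
    obtain ⟨hxy, hy2⟩ := bconv_mem hp0 hp1 hx0.le hx1
    have hy0 : 0 < y := lt_trans hx0 hxy
    have hd1 : HasDerivAt (fun x => bconv x p) (1 - 2*p) x := by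
      have : (fun x : ℝ => bconv x p) = fun x => x * (1 - 2*p) + p := by
        funext t; simp [bconv]; ring
      rw [this]
      simpa using (hasDerivAt_id x).mul_const (1 - 2*p) |>.add_const p
    have hd2 : HasDerivAt (fun x => Real.binEntropy (bconv x p))
        ((Real.log (1 - y) - Real.log y) * (1 - 2*p)) x :=
      by have := (Real.hasDerivAt_binEntropy (p := y) hy0.ne' (by linarith)).comp x hd1; exact this
    have hd3 : HasDerivAt (gfun p)
        ((Real.log (1 - y) - Real.log y) * (1 - 2*p)
          - (1 - 2*p) * (Real.log (1 - x) - Real.log x)) x := by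
      exact hd2.sub (((Real.hasDerivAt_binEntropy hx0.ne' (by linarith)).const_mul (1 - 2*p)))
    rw [hd3.deriv]
    have h1 : Real.log (1 - y) < Real.log (1 - x) :=
      Real.log_lt_log (by linarith) (by linarith)
    have h2 : Real.log x < Real.log y := Real.log_lt_log hx0 hxy
    nlinarith [h1, h2]

lemma gfun_symm (p x : ℝ) : gfun p (1 - x) = gfun p x := by
  have h : bconv (1 - x) p = 1 - bconv x p := by simp [bconv]; ring
  simp [gfun, h, Real.binEntropy_one_sub]

lemma gfun_le (p : ℝ) (hp0 : 0 < p) (hp1 : p < 1/2) {x : ℝ} (hx : x ∈ Set.Icc (0:ℝ) 1) :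
    gfun p x ≤ Real.binEntropy p := by
  have h0 : gfun p 0 = Real.binEntropy p := by simp [gfun, bconv]
  have key : ∀ z ∈ Set.Icc (0:ℝ) (1/2), gfun p z ≤ Real.binEntropy p := by
    intro z hz
    rcases eq_or_lt_of_le hz.1 with h | h
    · rw [← h, h0]
    · rw [← h0]
      exact ((gfun_anti p hp0 hp1) (by constructor <;> norm_num) hz h).le
  rcases le_or_gt x (1/2) with h | h
  · exact key x ⟨hx.1, h⟩
  · rw [← gfun_symm]
    exact key (1 - x) ⟨by linarith [hx.2], by linarith⟩

/-- When e ≤ 2p, D(x) ≤ 0 for all x ∈ [0,1]. -/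
theorem stmt4 (p e : ℝ) (hp0 : 0 < p) (hp1 : p < 1 / 2) (he0 : 0 ≤ e) (he1 : e ≤ 2 * p) :
    ∀ x ∈ Set.Icc (0 : ℝ) 1, Dfun p e x ≤ 0 := by
  intro x hx
  have hg := gfun_le p hp0 hp1 hx
  have hbe : 0 ≤ Real.binEntropy x := Real.binEntropy_nonneg hx.1 hx.2
  have hnum : Real.binEntropy (bconv x p) - (1 - e) * Real.binEntropy x
      - Real.binEntropy p ≤ 0 := by
    have : Real.binEntropy (bconv x p) - (1 - e) * Real.binEntropy x - Real.binEntropy p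
        = (gfun p x - Real.binEntropy p) + (e - 2*p) * Real.binEntropy x := by
      simp [gfun]; ring
    rw [this]
    nlinarith
  have hlog : (0:ℝ) < Real.log 2 := Real.log_pos (by norm_num)
  have : Dfun p e x = (Real.binEntropy (bconv x p) - (1 - e) * Real.binEntropy x
      - Real.binEntropy p) / Real.log 2 := by
    simp [Dfun, binH_eq]; ring
  rw [this]
  exact div_nonpos_of_nonpos_of_nonneg hnum hlog.le
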